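/- Let H be a complex Hilbert space and let v be a bounded linear operator on H satisfying v v* v = v, where v* denotes the Hilbert-space adjoint of v. Then for every ξ ∈ H the following are equivalent: (i) (v v* + v* v − v − v*) ξ = 0; (ii) v ξ = v v* ξ; (iii) v* ξ = v* v ξ. -/

import Mathlib

open ContinuousLinearMap

/-- For a partial isometry `v` on a complex Hilbert space `H`
(`v v* v = v`) and `ξ ∈ H`, the conditions `(v v* + v* v − v − v*) ξ = 0`,
`v ξ = v v* ξ` and `v* ξ = v* v ξ` are equivalent. -/
theorem stmt_5 {H : Type*} [NormedAddCommGroup H] [InnerProductSpace ℂ H] [CompleteSpace H]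
    (v : H →L[ℂ] H) (hv : v * adjoint v * v = v) (ξ : H) :
    ((v * adjoint v + adjoint v * v - v - adjoint v) ξ = 0 ↔
      v ξ = (v * adjoint v) ξ) ∧
    (v ξ = (v * adjoint v) ξ ↔ adjoint v ξ = (adjoint v * v) ξ) := by
  have hv' : adjoint v * v * adjoint v = adjoint v := by
    have := congrArg star hv
    simpa [star_eq_adjoint, star_mul, mul_assoc] using this
  -- key operator identity
  have hT : (adjoint v - v * adjoint v) * (v - v * adjoint v)
      = v * adjoint v + adjoint v * v - v - adjoint v := by
    have h2 : adjoint v * (v * adjoint v) = adjoint v := by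
      rw [← mul_assoc]; exact hv'
    have h3 : (v * adjoint v) * (v * adjoint v) = v * adjoint v := by
      rw [mul_assoc, h2]
    rw [sub_mul, mul_sub, mul_sub, h2, h3, hv]
    abel
  have hadj : adjoint (v - v * adjoint v) = adjoint v - v * adjoint v := by
    rw [← star_eq_adjoint, star_sub, star_mul, star_eq_adjoint, star_eq_adjoint,
      adjoint_adjoint]
  -- (ii) → (iii)
  have h23 : v ξ = (v * adjoint v) ξ → adjoint v ξ = (adjoint v * v) ξ := by
    intro h
    rw [ContinuousLinearMap.mul_apply, h, ← ContinuousLinearMap.mul_apply, ← mul_assoc, hv']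
  -- (iii) → (ii)
  have h32 : adjoint v ξ = (adjoint v * v) ξ → v ξ = (v * adjoint v) ξ := by
    intro h
    rw [ContinuousLinearMap.mul_apply, h, ← ContinuousLinearMap.mul_apply, ← mul_assoc, hv]
  refine ⟨⟨fun h1 => ?_, fun h2 => ?_⟩, ⟨h23, h32⟩⟩
  · -- (i) → (ii)
    have hinner : (inner ℂ ((v - v * adjoint v) ξ) ((v - v * adjoint v) ξ) : ℂ) = 0 := by
      rw [← adjoint_inner_left, hadj, ← ContinuousLinearMap.mul_apply, hT, h1, inner_zero_left]
    have hzero : (v - v * adjoint v) ξ = 0 := by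
      rwa [inner_self_eq_zero] at hinner
    rw [sub_apply] at hzero
    exact sub_eq_zero.mp hzero
  · -- (ii) → (i)
    have h3 := h23 h2
    simp only [add_apply, sub_apply]
    rw [← h2, ← h3]
    abel
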